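/- Efron's theorem (n = 2, Gaussian case): Let X₁, X₂ be independent standard normal random variables and S = X₁ + X₂. Then for every bounded coordinatewise-nondecreasing function g : ℝ² → ℝ, the map s ↦ E[g(X₁, X₂) | X₁ + X₂ = s] is nondecreasing. -/

import Mathlib

open MeasureTheory ProbabilityTheory
open scoped ENNReal NNReal

open Real
lemma half_ne : (1/2 : ℝ≥0) ≠ 0 := by norm_num
lemma two_ne : (2 : ℝ≥0) ≠ 0 := by norm_num

lemma exp_aux (a b p q : ℝ) : (a⁻¹ * Real.exp p) * (b⁻¹ * Real.exp q)
    = (a * b)⁻¹ * Real.exp (p + q) := by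
  rw [Real.exp_add, mul_inv]; ring_nf

lemma pdfReal_eq (u x : ℝ) :
    gaussianPDFReal 0 1 x * gaussianPDFReal 0 1 (u - x)
      = gaussianPDFReal 0 2 u * gaussianPDFReal (u/2) (1/2) x := by
  simp only [gaussianPDFReal]
  push_cast
  rw [exp_aux, exp_aux]
  have h1 : Real.sqrt (2 * π * 1) * Real.sqrt (2 * π * 1) = 2 * π := by
    rw [Real.mul_self_sqrt (by positivity)]; ring
  have h2 : Real.sqrt (2 * π * 2) * Real.sqrt (2 * π * (1/2)) = 2 * π := by
    rw [← Real.sqrt_mul (by positivity)]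
    have : 2 * π * 2 * (2 * π * (1/2)) = (2 * π)^2 := by ring
    rw [this, Real.sqrt_sq (by positivity)]
  rw [h1, h2]
  congr 1
  ring

lemma pdf_eq (u x : ℝ) :
    gaussianPDF 0 1 x * gaussianPDF 0 1 (u - x)
      = gaussianPDF 0 2 u * gaussianPDF (u/2) (1/2) x := by
  simp only [gaussianPDF]
  rw [← ENNReal.ofReal_mul (gaussianPDFReal_nonneg _ _ _),
    ← ENNReal.ofReal_mul (gaussianPDFReal_nonneg _ _ _), pdfReal_eq]

lemma measurable_gpdf2 : Measurable (fun p : ℝ × ℝ => gaussianPDF (p.1/2) (1/2) p.2) := by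
  simp only [gaussianPDF, gaussianPDFReal]
  apply Measurable.ennreal_ofReal
  fun_prop

noncomputable def gKer : Kernel ℝ ℝ :=
⟨fun s => gaussianReal (s/2) (1/2), by
  apply Measure.measurable_of_measurable_coe
  intro B hB
  have : (fun s => gaussianReal (s/2) (1/2) B)
      = fun s => ∫⁻ x, B.indicator (fun x => gaussianPDF (s/2) (1/2) x) x ∂volume := by
    ext s
    rw [gaussianReal_of_var_ne_zero _ half_ne, withDensity_apply _ hB,
      lintegral_indicator hB]
  rw [this]
  apply Measurable.lintegral_prod_right'
    (f := fun p : ℝ × ℝ => B.indicator (fun x => gaussianPDF (p.1/2) (1/2) x) p.2)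
  have : (fun p : ℝ × ℝ => B.indicator (fun x => gaussianPDF (p.1/2) (1/2) x) p.2)
      = (Prod.snd ⁻¹' B).indicator (fun p : ℝ × ℝ => gaussianPDF (p.1/2) (1/2) p.2) := by
    ext p
    by_cases h : p.2 ∈ B <;> simp [Set.indicator, h]
  rw [this]
  exact measurable_gpdf2.indicator (measurable_snd hB)⟩

lemma gKer_apply (s : ℝ) : gKer s = gaussianReal (s/2) (1/2) := rfl

instance : IsMarkovKernel gKer := ⟨fun s => by rw [gKer_apply]; infer_instance⟩

noncomputable def etaK : Kernel ℝ (ℝ × ℝ) :=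
⟨fun s => (gKer s).map (fun x => (x, s - x)), by
  apply Measure.measurable_of_measurable_coe
  intro B hB
  have hm : Measurable (fun p : ℝ × ℝ => (p.2, p.1 - p.2)) := by fun_prop
  have : (fun s => (gKer s).map (fun x => (x, s - x)) B)
      = fun s => gKer s (Prod.mk s ⁻¹' ((fun p : ℝ × ℝ => (p.2, p.1 - p.2)) ⁻¹' B)) := by
    ext s
    rw [Measure.map_apply (by fun_prop) hB]
    rfl
  rw [this]
  exact Kernel.measurable_kernel_prodMk_left (hm hB)⟩

lemma etaK_apply (s : ℝ) : etaK s = (gaussianReal (s/2) (1/2)).map (fun x => (x, s - x)) := rfl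

instance : IsMarkovKernel etaK :=
  ⟨fun s => by rw [etaK_apply]; exact Measure.isProbabilityMeasure_map (by fun_prop)⟩

lemma gauss_one_eq : gaussianReal 0 1 = volume.withDensity (gaussianPDF 0 1) :=
  gaussianReal_of_var_ne_zero 0 one_ne_zero

lemma gauss_two_eq : gaussianReal 0 2 = volume.withDensity (gaussianPDF 0 2) :=
  gaussianReal_of_var_ne_zero 0 two_ne

lemma core :
    ((gaussianReal 0 1).prod (gaussianReal 0 1)).map (fun p : ℝ × ℝ => (p.1 + p.2, p.1))
      = (gaussianReal 0 2) ⊗ₘ gKer := by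
  have hT : Measurable (fun p : ℝ × ℝ => (p.1 + p.2, p.1)) := by fun_prop
  ext s hs
  set F : ℝ × ℝ → ℝ≥0∞ := s.indicator 1 with hFdef
  have hF : Measurable F := measurable_const.indicator hs
  have hγ := gauss_one_eq
  have hg1 := measurable_gaussianPDF (0:ℝ) 1
  have hg2 := measurable_gaussianPDF (0:ℝ) 2
  have hgm := measurable_gpdf2
  -- the inner function after change of variables
  have hmeas_inner : Measurable (fun q : ℝ × ℝ =>
      gaussianPDF 0 1 q.1 * (gaussianPDF 0 1 (q.2 - q.1) * F (q.2, q.1))) := by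
    apply (hg1.comp measurable_fst).mul
    exact ((hg1.comp (measurable_snd.sub measurable_fst)).mul
      (hF.comp (measurable_snd.prodMk measurable_fst)))
  calc ((gaussianReal 0 1).prod (gaussianReal 0 1)).map (fun p : ℝ × ℝ => (p.1 + p.2, p.1)) s
      = ((gaussianReal 0 1).prod (gaussianReal 0 1))
          ((fun p : ℝ × ℝ => (p.1 + p.2, p.1)) ⁻¹' s) := Measure.map_apply hT hs
    _ = ∫⁻ p : ℝ × ℝ, F (p.1 + p.2, p.1) ∂((gaussianReal 0 1).prod (gaussianReal 0 1)) := by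
        rw [← lintegral_indicator_one (hT hs)]
        apply lintegral_congr; intro p
        by_cases h : (p.1 + p.2, p.1) ∈ s <;>
          simp [hFdef, Set.indicator, h, Set.mem_preimage]
    _ = ∫⁻ x, ∫⁻ y, F (x + y, x) ∂(gaussianReal 0 1) ∂(gaussianReal 0 1) := by
        rw [lintegral_prod (fun p : ℝ × ℝ => F (p.1 + p.2, p.1)) ((hF.comp hT).aemeasurable)]
    _ = ∫⁻ x, ∫⁻ u, gaussianPDF 0 1 (u - x) * F (u, x) ∂volume ∂(gaussianReal 0 1) := by
        apply lintegral_congr; intro x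
        rw [hγ, lintegral_withDensity_eq_lintegral_mul volume hg1
          (g := fun y => F (x + y, x)) (hF.comp (by fun_prop))]
        rw [← lintegral_add_left_eq_self
          (fun u => gaussianPDF 0 1 (u - x) * F (u, x)) x]
        apply lintegral_congr; intro y
        simp [Pi.mul_apply, add_sub_cancel_left]
    _ = ∫⁻ x, gaussianPDF 0 1 x *
          ∫⁻ u, gaussianPDF 0 1 (u - x) * F (u, x) ∂volume ∂volume := by
        rw [hγ, lintegral_withDensity_eq_lintegral_mul volume hg1
          (g := fun x => ∫⁻ u, gaussianPDF 0 1 (u - x) * F (u, x) ∂volume)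
          (Measurable.lintegral_prod_right'
            (f := fun q : ℝ × ℝ => gaussianPDF 0 1 (q.2 - q.1) * F (q.2, q.1))
            ((hg1.comp (measurable_snd.sub measurable_fst)).mul
              (hF.comp (measurable_snd.prodMk measurable_fst))))]
        rfl
    _ = ∫⁻ x, ∫⁻ u, gaussianPDF 0 1 x *
          (gaussianPDF 0 1 (u - x) * F (u, x)) ∂volume ∂volume := by
        apply lintegral_congr; intro x
        rw [← lintegral_const_mul (gaussianPDF 0 1 x)
          (f := fun u => gaussianPDF 0 1 (u - x) * F (u, x))
          ((hg1.comp (measurable_id.sub measurable_const)).mul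
            (hF.comp (measurable_id.prodMk measurable_const)))]
    _ = ∫⁻ u, ∫⁻ x, gaussianPDF 0 1 x *
          (gaussianPDF 0 1 (u - x) * F (u, x)) ∂volume ∂volume := by
        exact lintegral_lintegral_swap hmeas_inner.aemeasurable
    _ = ∫⁻ u, ∫⁻ x, gaussianPDF 0 2 u *
          (gaussianPDF (u/2) (1/2) x * F (u, x)) ∂volume ∂volume := by
        apply lintegral_congr; intro u; apply lintegral_congr; intro x
        rw [← mul_assoc, ← mul_assoc, pdf_eq]
    _ = ∫⁻ u, gaussianPDF 0 2 u *
          ∫⁻ x, gaussianPDF (u/2) (1/2) x * F (u, x) ∂volume ∂volume := by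
        apply lintegral_congr; intro u
        rw [← lintegral_const_mul (gaussianPDF 0 2 u)
          (f := fun x => gaussianPDF (u/2) (1/2) x * F (u, x))
          ((hgm.comp (measurable_const.prodMk measurable_id)).mul
            (hF.comp (measurable_const.prodMk measurable_id)))]
    _ = ∫⁻ u, gaussianPDF 0 2 u * gKer u (Prod.mk u ⁻¹' s) ∂volume := by
        apply lintegral_congr; intro u
        congr 1
        rw [gKer_apply, gaussianReal_of_var_ne_zero _ half_ne,
          withDensity_apply _ (measurable_prodMk_left hs),
          ← lintegral_indicator (measurable_prodMk_left hs)]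
        apply lintegral_congr; intro x
        by_cases h : (u, x) ∈ s <;>
          simp [hFdef, Set.indicator, h, Set.mem_preimage]
    _ = ∫⁻ u, gKer u (Prod.mk u ⁻¹' s) ∂(gaussianReal 0 2) := by
        rw [gauss_two_eq, lintegral_withDensity_eq_lintegral_mul volume hg2
          (g := fun u => gKer u (Prod.mk u ⁻¹' s))
          (Kernel.measurable_kernel_prodMk_left hs)]
        rfl
    _ = ((gaussianReal 0 2) ⊗ₘ gKer) s := (Measure.compProd_apply hs).symm

lemma compProd_map_phi :
    ((gaussianReal 0 2) ⊗ₘ gKer).map (fun q : ℝ × ℝ => (q.1, (q.2, q.1 - q.2)))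
      = (gaussianReal 0 2) ⊗ₘ etaK := by
  have hφ : Measurable (fun q : ℝ × ℝ => (q.1, (q.2, q.1 - q.2))) := by fun_prop
  ext B hB
  rw [Measure.map_apply hφ hB, Measure.compProd_apply (hφ hB), Measure.compProd_apply hB]
  apply lintegral_congr; intro u
  rw [etaK_apply, Measure.map_apply (by fun_prop) (measurable_prodMk_left hB),
    ← gKer_apply]
  rfl

lemma main_eq :
    ((gaussianReal 0 1).prod (gaussianReal 0 1)).map (fun p : ℝ × ℝ => (p.1 + p.2, p))
      = (gaussianReal 0 2) ⊗ₘ etaK := by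
  have hT : Measurable (fun p : ℝ × ℝ => (p.1 + p.2, p.1)) := by fun_prop
  have hφ : Measurable (fun q : ℝ × ℝ => (q.1, (q.2, q.1 - q.2))) := by fun_prop
  have : (fun p : ℝ × ℝ => (p.1 + p.2, p))
      = (fun q : ℝ × ℝ => (q.1, (q.2, q.1 - q.2))) ∘ (fun p : ℝ × ℝ => (p.1 + p.2, p.1)) := by
    ext p <;> simp
  rw [this, ← Measure.map_map hφ hT, core, compProd_map_phi]

lemma sum_law :
    ((gaussianReal 0 1).prod (gaussianReal 0 1)).map (fun p : ℝ × ℝ => p.1 + p.2)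
      = gaussianReal 0 2 := by
  have hT : Measurable (fun p : ℝ × ℝ => (p.1 + p.2, p.1)) := by fun_prop
  have h := congrArg Measure.fst core
  rwa [Measure.fst_compProd, Measure.fst, Measure.map_map measurable_fst hT] at h

lemma eta_integral (g : ℝ × ℝ → ℝ) (hgm : Measurable g) (s : ℝ) :
    ∫ x, g x ∂(etaK s) = ∫ t, g (t + s/2, s - (t + s/2)) ∂(gaussianReal 0 (1/2)) := by
  rw [etaK_apply, integral_map (by fun_prop) hgm.aestronglyMeasurable]
  have h : gaussianReal (s/2) (1/2) = (gaussianReal 0 (1/2)).map (fun x => x + s/2) := by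
    rw [gaussianReal_map_add_const (s/2)]; norm_num
  rw [h, integral_map (f := fun x : ℝ => g (x, s - x)) (by fun_prop)
    ((hgm.comp (measurable_id.prodMk (measurable_const.sub measurable_id))).aestronglyMeasurable)]

lemma eta_mono (g : ℝ × ℝ → ℝ) (hgm : Measurable g) (hmono : Monotone g)
    (C : ℝ) (hC : ∀ x, |g x| ≤ C) :
    Monotone (fun s => ∫ x, g x ∂(etaK s)) := by
  intro s s' hss
  simp only [eta_integral g hgm]
  have hint : ∀ u : ℝ, Integrable (fun t => g (t + u/2, u - (t + u/2)))
      (gaussianReal 0 (1/2)) := by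
    intro u
    refine (integrable_const C).mono' ((hgm.comp (by fun_prop)).aestronglyMeasurable)
      (ae_of_all _ fun t => ?_)
    rw [Real.norm_eq_abs]; exact hC _
  refine integral_mono (hint s) (hint s') fun t => ?_
  exact hmono (Prod.mk_le_mk.mpr ⟨by linarith, by linarith⟩)


/-- Efron's theorem (`n = 2`, Gaussian case): if `X₁, X₂` are independent standard normal
random variables and `S = X₁ + X₂`, then `(X₁, X₂)` is stochastically increasing in `S`:
there is a version `η` of the conditional distribution of `(X₁, X₂)` given `S` such that
for every bounded coordinatewise-nondecreasing measurable `g`, the map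
`s ↦ E[g(X₁, X₂) | S = s] = ∫ g dη(s)` is nondecreasing. -/
theorem stmt13
    {Ω : Type*} [MeasurableSpace Ω] (μ : Measure Ω) [IsProbabilityMeasure μ]
    (X₁ X₂ : Ω → ℝ) (h1 : Measurable X₁) (h2 : Measurable X₂)
    (hindep : IndepFun X₁ X₂ μ)
    (hd1 : μ.map X₁ = gaussianReal 0 1) (hd2 : μ.map X₂ = gaussianReal 0 1) :
    ∃ η : Kernel ℝ (ℝ × ℝ), IsMarkovKernel η ∧
      μ.map (fun ω => (X₁ ω + X₂ ω, (X₁ ω, X₂ ω))) =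
        (μ.map (fun ω => X₁ ω + X₂ ω)) ⊗ₘ η ∧
      ∀ g : ℝ × ℝ → ℝ, Measurable g → Monotone g → (∃ C, ∀ x, |g x| ≤ C) →
        Monotone (fun s => ∫ x, g x ∂(η s)) := by
  refine ⟨etaK, inferInstance, ?_, ?_⟩
  · have hmap2 : μ.map (fun ω => (X₁ ω, X₂ ω))
        = (gaussianReal 0 1).prod (gaussianReal 0 1) := by
      rw [(indepFun_iff_map_prod_eq_prod_map_map h1.aemeasurable h2.aemeasurable).mp hindep,
        hd1, hd2]
    have hS : μ.map (fun ω => X₁ ω + X₂ ω) = gaussianReal 0 2 := by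
      have h : (fun ω => X₁ ω + X₂ ω)
          = (fun p : ℝ × ℝ => p.1 + p.2) ∘ (fun ω => (X₁ ω, X₂ ω)) := rfl
      rw [h, ← Measure.map_map (by fun_prop) (h1.prodMk h2), hmap2, sum_law]
    have hpair : μ.map (fun ω => (X₁ ω + X₂ ω, (X₁ ω, X₂ ω)))
        = ((gaussianReal 0 1).prod (gaussianReal 0 1)).map (fun p : ℝ × ℝ => (p.1 + p.2, p)) := by
      have h : (fun ω => (X₁ ω + X₂ ω, (X₁ ω, X₂ ω)))
          = (fun p : ℝ × ℝ => (p.1 + p.2, p)) ∘ (fun ω => (X₁ ω, X₂ ω)) := rfl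
      rw [h, ← Measure.map_map (by fun_prop) (h1.prodMk h2), hmap2]
    rw [hpair, hS, main_eq]
  · rintro g hgm hmono ⟨C, hC⟩
    exact eta_mono g hgm hmono C hC
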